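/- Let X, X̃ ∈ 𝕆^{n×k}. Suppose either θ ∈ {0,1} or tr(XᵀAX + XᵀD) ≥ 0. If tr(X̃ᵀ E(X) X̃) ≥ tr(Xᵀ E(X) X), then f_θ(X) ≤ g_θ(X̃) + tr(X̃ᵀ D Xᵀ X̃)/(tr(X̃ᵀBX̃))^θ ≤ g_θ(X̃) + ‖X̃ᵀD‖_tr/(tr(X̃ᵀBX̃))^θ. Moreover, if the inequality tr(X̃ᵀ E(X) X̃) ≥ tr(Xᵀ E(X) X) is strict, then so is the first of the two conclusion inequalities. -/

import Mathlib

open Matrix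

noncomputable section

/-- `f_θ(X) = tr(XᵀAX + XᵀD) / (tr(XᵀBX))^θ`. -/
def fTheta {n k : ℕ} (A B : Matrix (Fin n) (Fin n) ℝ) (D : Matrix (Fin n) (Fin k) ℝ)
    (θ : ℝ) (X : Matrix (Fin n) (Fin k) ℝ) : ℝ :=
  (trace (Xᵀ * A * X) + trace (Xᵀ * D)) / trace (Xᵀ * B * X) ^ θ

/-- `g_θ(X) = tr(XᵀAX) / (tr(XᵀBX))^θ`. -/
def gTheta {n k : ℕ} (A B : Matrix (Fin n) (Fin n) ℝ) (θ : ℝ)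
    (X : Matrix (Fin n) (Fin k) ℝ) : ℝ :=
  trace (Xᵀ * A * X) / trace (Xᵀ * B * X) ^ θ

/-- `f₁(X) = tr(XᵀAX + XᵀD) / tr(XᵀBX)`. -/
def f1 {n k : ℕ} (A B : Matrix (Fin n) (Fin n) ℝ) (D : Matrix (Fin n) (Fin k) ℝ)
    (X : Matrix (Fin n) (Fin k) ℝ) : ℝ :=
  (trace (Xᵀ * A * X) + trace (Xᵀ * D)) / trace (Xᵀ * B * X)

/-- `E(X) = (2/(tr(XᵀBX))^θ) · [A + (DXᵀ + XDᵀ)/2 − θ f₁(X) B]`. -/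
def Emat {n k : ℕ} (A B : Matrix (Fin n) (Fin n) ℝ) (D : Matrix (Fin n) (Fin k) ℝ)
    (θ : ℝ) (X : Matrix (Fin n) (Fin k) ℝ) : Matrix (Fin n) (Fin n) ℝ :=
  (2 / trace (Xᵀ * B * X) ^ θ) •
    (A + (2⁻¹ : ℝ) • (D * Xᵀ + X * Dᵀ) - (θ * f1 A B D X) • B)

/-- The trace norm (sum of singular values) of a real matrix, expressed as the sum of the
square roots of the eigenvalues of `MᵀM`. -/
def traceNorm {m k : ℕ} (M : Matrix (Fin m) (Fin k) ℝ) : ℝ :=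
  ∑ i, Real.sqrt ((show (Mᵀ * M).IsHermitian by
    simpa using Matrix.isHermitian_conjTranspose_mul_self M).eigenvalues i)

/-! ### Auxiliary lemmas -/

lemma trace_tms {n k : ℕ} (M : Matrix (Fin n) (Fin k) ℝ) :
    trace (Mᵀ * M) = ∑ j, ∑ i, (M i j)^2 := by
  simp [trace, diag, mul_apply, sq]

lemma trace_transpose_mul_self_nonneg {n k : ℕ} (M : Matrix (Fin n) (Fin k) ℝ) :
    0 ≤ trace (Mᵀ * M) := by
  rw [trace_tms]
  exact Finset.sum_nonneg fun j _ => Finset.sum_nonneg fun i _ => sq_nonneg _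

lemma eq_zero_of_trace_transpose_mul_self {n k : ℕ} {M : Matrix (Fin n) (Fin k) ℝ}
    (h : trace (Mᵀ * M) = 0) : M = 0 := by
  rw [trace_tms] at h
  have h2 := (Finset.sum_eq_zero_iff_of_nonneg
    (fun j _ => Finset.sum_nonneg fun i _ => sq_nonneg (M i j))).mp h
  ext i j
  have h3 := (Finset.sum_eq_zero_iff_of_nonneg (fun i _ => sq_nonneg (M i j))).mp
    (h2 j (Finset.mem_univ j)) i (Finset.mem_univ i)
  simpa using sq_eq_zero_iff.mp h3

/-- positivity of tr(XᵀBX) -/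
lemma trace_XBX_pos {n k : ℕ} {B : Matrix (Fin n) (Fin n) ℝ} (hB : B.PosSemidef)
    (hrank : n - k < B.rank) {X : Matrix (Fin n) (Fin k) ℝ} (hX : Xᵀ * X = 1) :
    0 < trace (Xᵀ * B * X) := by
  open scoped MatrixOrder Matrix.Norms.L2Operator in
  obtain ⟨C, hC⟩ := CStarAlgebra.nonneg_iff_eq_star_mul_self.mp hB.nonneg
  rw [star_eq_conjTranspose, conjTranspose_eq_transpose_of_trivial] at hC
  have key : Xᵀ * B * X = (C * X)ᵀ * (C * X) := by
    rw [hC, transpose_mul]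
    simp only [Matrix.mul_assoc]
  rw [key]
  rcases lt_or_eq_of_le (trace_transpose_mul_self_nonneg (C * X)) with h | h
  · exact h
  · exfalso
    have hCX : C * X = 0 := eq_zero_of_trace_transpose_mul_self h.symm
    have hBX : B * X = 0 := by rw [hC]; rw [Matrix.mul_assoc, hCX, Matrix.mul_zero]
    have hrk := Matrix.rank_add_rank_le_card_of_mul_eq_zero hBX
    have hX1 : X.rank = k := by
      have := Matrix.rank_transpose_mul_self X
      rw [hX, Matrix.rank_one] at this
      simpa using this.symm
    rw [hX1, Fintype.card_fin] at hrk
    omega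

lemma psd_diag_nonneg {k : ℕ} {P : Matrix (Fin k) (Fin k) ℝ} (hP : P.PosSemidef) (i : Fin k) :
    0 ≤ P i i := by
  exact hP.diag_nonneg

/-- von Neumann-type bound: `tr(QM) ≤ ‖M‖_tr` when `QQᵀ ≼ 1`. -/
lemma trace_mul_le_traceNorm {k : ℕ} (M Q : Matrix (Fin k) (Fin k) ℝ)
    (hQ : (1 - Q * Qᵀ).PosSemidef) :
    trace (Q * M) ≤ ∑ i, Real.sqrt ((show (Mᵀ * M).IsHermitian by
    simpa using Matrix.isHermitian_conjTranspose_mul_self M).eigenvalues i) := by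
  have hM : (Mᵀ * M).IsHermitian := by simpa using Matrix.isHermitian_conjTranspose_mul_self M
  set V : Matrix (Fin k) (Fin k) ℝ := ↑(hM.eigenvectorUnitary) with hVdef
  have hVmem : V ∈ Matrix.unitaryGroup (Fin k) ℝ := hM.eigenvectorUnitary.2
  have hVV : V * Vᵀ = 1 := by
    have := (Matrix.mem_unitaryGroup_iff).mp hVmem
    rwa [star_eq_conjTranspose, conjTranspose_eq_transpose_of_trivial] at this
  have hVV' : Vᵀ * V = 1 := by
    have := (Matrix.mem_unitaryGroup_iff').mp hVmem
    rwa [star_eq_conjTranspose, conjTranspose_eq_transpose_of_trivial] at this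
  have hdiag : Vᵀ * (Mᵀ * M) * V = diagonal hM.eigenvalues := by
    have := hM.conjStarAlgAut_star_eigenvectorUnitary
    rwa [Unitary.conjStarAlgAut_star_apply, star_eq_conjTranspose, conjTranspose_eq_transpose_of_trivial,
      RCLike.ofReal_real_eq_id, Function.id_comp] at this
  set N := M * V with hN
  set R := Qᵀ * V with hR
  have hNN : ∀ i, ∑ j, (N j i)^2 = hM.eigenvalues i := by
    intro i
    have : (Nᵀ * N) i i = diagonal hM.eigenvalues i i := by
      rw [hN, transpose_mul, ← hdiag]
      simp only [Matrix.mul_assoc]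
    simpa [mul_apply, sq, diagonal] using this
  have hRR : ∀ i, ∑ j, (R j i)^2 ≤ 1 := by
    intro i
    have hpsd : (Vᵀ * (1 - Q * Qᵀ) * V).PosSemidef := by
      have := hQ.conjTranspose_mul_mul_same V
      rwa [conjTranspose_eq_transpose_of_trivial] at this
    have hd := psd_diag_nonneg hpsd i
    have hexp : (Vᵀ * (1 - Q * Qᵀ) * V) i i = 1 - (Rᵀ * R) i i := by
      rw [Matrix.mul_sub, Matrix.sub_mul, Matrix.mul_one, hVV', hR]
      have : (Qᵀ * V)ᵀ * (Qᵀ * V) = Vᵀ * (Q * Qᵀ) * V := by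
        rw [transpose_mul, transpose_transpose]
        simp only [Matrix.mul_assoc]
      rw [this]
      simp [Matrix.sub_apply]
    have hRRi : (Rᵀ * R) i i = ∑ j, (R j i)^2 := by
      simp [mul_apply, sq]
    rw [hexp, hRRi] at hd
    linarith
  have htr : trace (Q * M) = ∑ i, ∑ j, R j i * N j i := by
    have h1 : trace (Vᵀ * (Q * N)) = trace (Q * M) := by
      rw [hN, ← Matrix.mul_assoc Q M V, trace_mul_comm, Matrix.mul_assoc, hVV, Matrix.mul_one]
    rw [← h1, trace]
    apply Finset.sum_congr rfl
    intro i _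
    simp only [diag_apply, mul_apply, hR, transpose_apply, Finset.mul_sum, Finset.sum_mul]
    rw [Finset.sum_comm]
    apply Finset.sum_congr rfl
    intro j _
    apply Finset.sum_congr rfl
    intro l _
    ring
  rw [htr]
  refine Finset.sum_le_sum fun i _ => ?_
  have hcs := Finset.sum_mul_sq_le_sq_mul_sq Finset.univ (fun j => R j i) (fun j => N j i)
  have heig : 0 ≤ hM.eigenvalues i := by
    rw [← hNN i]; exact Finset.sum_nonneg fun j _ => sq_nonneg _
  have h2 : (∑ j, R j i * N j i)^2 ≤ hM.eigenvalues i := by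
    calc (∑ j, R j i * N j i)^2 ≤ (∑ j, (R j i)^2) * (∑ j, (N j i)^2) := hcs
    _ ≤ 1 * hM.eigenvalues i := by
        rw [hNN i]
        exact mul_le_mul_of_nonneg_right (hRR i) heig
    _ = hM.eigenvalues i := one_mul _
  calc ∑ j, R j i * N j i ≤ |∑ j, R j i * N j i| := le_abs_self _
  _ = Real.sqrt ((∑ j, R j i * N j i)^2) := (Real.sqrt_sq_eq_abs _).symm
  _ ≤ Real.sqrt (hM.eigenvalues i) := Real.sqrt_le_sqrt h2

lemma amgm2 {s θ : ℝ} (hs : 0 ≤ s) (hθ0 : 0 ≤ θ) (hθ1 : θ ≤ 1) :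
    s ^ θ ≤ (1 - θ) + θ * s := by
  have h := Real.geom_mean_le_arith_mean2_weighted (sub_nonneg.mpr hθ1) hθ0
    (zero_le_one) hs (by ring)
  simpa using h

lemma scalar_core {c s θ : ℝ} (hs : 0 ≤ s) (hθ0 : 0 ≤ θ) (hθ1 : θ ≤ 1)
    (hcase : (θ = 0 ∨ θ = 1) ∨ 0 ≤ c) : c * s ^ θ ≤ c * (1 - θ) + θ * (c * s) := by
  rcases hcase with (h0 | h1) | hc
  · subst h0; simp [Real.rpow_zero]
  · subst h1; simp [Real.rpow_one]
  · have := amgm2 hs hθ0 hθ1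
    nlinarith

lemma scalar_main {c r t tt θ : ℝ} (ht : 0 < t) (htt : 0 < tt) (hθ0 : 0 ≤ θ) (hθ1 : θ ≤ 1)
    (hcase : (θ = 0 ∨ θ = 1) ∨ 0 ≤ c)
    (h : (1 - θ) * c ≤ r - θ * (c * (tt / t))) : c / t ^ θ ≤ r / tt ^ θ := by
  have hs : 0 ≤ tt / t := div_nonneg htt.le ht.le
  have htp : (0:ℝ) < t ^ θ := Real.rpow_pos_of_pos ht θ
  have http : (0:ℝ) < tt ^ θ := Real.rpow_pos_of_pos htt θ
  rw [div_le_div_iff₀ htp http]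
  have h1 : tt ^ θ = t ^ θ * (tt / t) ^ θ := by
    rw [← Real.mul_rpow ht.le hs]
    congr 1
    field_simp
  rw [h1, ← mul_assoc]
  calc c * t ^ θ * (tt / t) ^ θ = (c * (tt / t) ^ θ) * t ^ θ := by ring
  _ ≤ (c * (1 - θ) + θ * (c * (tt / t))) * t ^ θ :=
      mul_le_mul_of_nonneg_right (scalar_core hs hθ0 hθ1 hcase) htp.le
  _ ≤ r * t ^ θ := by nlinarith

lemma scalar_main_strict {c r t tt θ : ℝ} (ht : 0 < t) (htt : 0 < tt) (hθ0 : 0 ≤ θ) (hθ1 : θ ≤ 1)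
    (hcase : (θ = 0 ∨ θ = 1) ∨ 0 ≤ c)
    (h : (1 - θ) * c < r - θ * (c * (tt / t))) : c / t ^ θ < r / tt ^ θ := by
  have hs : 0 ≤ tt / t := div_nonneg htt.le ht.le
  have htp : (0:ℝ) < t ^ θ := Real.rpow_pos_of_pos ht θ
  have http : (0:ℝ) < tt ^ θ := Real.rpow_pos_of_pos htt θ
  rw [div_lt_div_iff₀ htp http]
  have h1 : tt ^ θ = t ^ θ * (tt / t) ^ θ := by
    rw [← Real.mul_rpow ht.le hs]
    congr 1
    field_simp
  rw [h1, ← mul_assoc]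
  calc c * t ^ θ * (tt / t) ^ θ = (c * (tt / t) ^ θ) * t ^ θ := by ring
  _ ≤ (c * (1 - θ) + θ * (c * (tt / t))) * t ^ θ :=
      mul_le_mul_of_nonneg_right (scalar_core hs hθ0 hθ1 hcase) htp.le
  _ < r * t ^ θ := by nlinarith

lemma trace_E {n k : ℕ} (A B : Matrix (Fin n) (Fin n) ℝ) (D : Matrix (Fin n) (Fin k) ℝ)
    (θ : ℝ) (X Y : Matrix (Fin n) (Fin k) ℝ) :
    trace (Yᵀ * Emat A B D θ X * Y) =
      (2 / trace (Xᵀ * B * X) ^ θ) * (trace (Yᵀ * A * Y) + trace (Yᵀ * D * Xᵀ * Y)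
        - θ * f1 A B D X * trace (Yᵀ * B * Y)) := by
  have key : trace (Yᵀ * (X * Dᵀ) * Y) = trace (Yᵀ * D * Xᵀ * Y) := by
    rw [← trace_transpose (Yᵀ * (X * Dᵀ) * Y)]
    congr 1
    simp only [transpose_mul, transpose_transpose, Matrix.mul_assoc]
  simp only [Emat, Matrix.smul_mul, Matrix.mul_smul, trace_smul, smul_eq_mul,
    Matrix.mul_add, Matrix.add_mul, Matrix.mul_sub, Matrix.sub_mul, trace_add, trace_sub]
  rw [show Yᵀ * (D * Xᵀ) * Y = Yᵀ * D * Xᵀ * Y by simp only [Matrix.mul_assoc]] at *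
  rw [key]
  ring

/-- Theorem 2.4. -/
theorem stmt2 {n k : ℕ} (hk : 1 ≤ k) (hkn : k < n)
    (A B : Matrix (Fin n) (Fin n) ℝ) (hA : A.IsSymm) (hB : B.PosSemidef)
    (hrank : n - k < B.rank)
    (D : Matrix (Fin n) (Fin k) ℝ) (θ : ℝ) (hθ0 : 0 ≤ θ) (hθ1 : θ ≤ 1)
    (X Xt : Matrix (Fin n) (Fin k) ℝ) (hX : Xᵀ * X = 1) (hXt : Xtᵀ * Xt = 1)
    (hcase : (θ = 0 ∨ θ = 1) ∨ 0 ≤ trace (Xᵀ * A * X) + trace (Xᵀ * D))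
    (htr : trace (Xᵀ * Emat A B D θ X * X) ≤ trace (Xtᵀ * Emat A B D θ X * Xt)) :
    fTheta A B D θ X
        ≤ gTheta A B θ Xt + trace (Xtᵀ * D * Xᵀ * Xt) / trace (Xtᵀ * B * Xt) ^ θ
      ∧ gTheta A B θ Xt + trace (Xtᵀ * D * Xᵀ * Xt) / trace (Xtᵀ * B * Xt) ^ θ
          ≤ gTheta A B θ Xt + traceNorm (Xtᵀ * D) / trace (Xtᵀ * B * Xt) ^ θ
      ∧ (trace (Xᵀ * Emat A B D θ X * X) < trace (Xtᵀ * Emat A B D θ X * Xt) →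
          fTheta A B D θ X
            < gTheta A B θ Xt + trace (Xtᵀ * D * Xᵀ * Xt) / trace (Xtᵀ * B * Xt) ^ θ) := by
  have ht : 0 < trace (Xᵀ * B * X) := trace_XBX_pos hB hrank hX
  have htt : 0 < trace (Xtᵀ * B * Xt) := trace_XBX_pos hB hrank hXt
  set a := trace (Xᵀ * A * X) with ha
  set d := trace (Xᵀ * D) with hd
  set t := trace (Xᵀ * B * X) with htdef
  set a' := trace (Xtᵀ * A * Xt) with ha'
  set d' := trace (Xtᵀ * D * Xᵀ * Xt) with hd'
  set tt := trace (Xtᵀ * B * Xt) with httdef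
  have hc2 : (0:ℝ) < 2 / t ^ θ := by positivity
  -- trace of D-term at X
  have hDX : trace (Xᵀ * D * Xᵀ * X) = d := by
    rw [Matrix.mul_assoc (Xᵀ * D) Xᵀ X, hX, Matrix.mul_one]
  have hf1t : θ * f1 A B D X * t = θ * (a + d) := by
    have : f1 A B D X * t = a + d := by
      rw [f1, ← ha, ← hd, ← htdef, div_mul_cancel₀ _ ht.ne']
    rw [mul_assoc, this]
  have hf1tt : θ * f1 A B D X * tt = θ * ((a + d) * (tt / t)) := by
    rw [f1, ← ha, ← hd, ← htdef]
    field_simp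
  have eX : trace (Xᵀ * Emat A B D θ X * X) = (2 / t ^ θ) * ((a + d) - θ * (a + d)) := by
    rw [trace_E, hDX, hf1t, ← ha, ← htdef]
  have eXt : trace (Xtᵀ * Emat A B D θ X * Xt)
      = (2 / t ^ θ) * (a' + d' - θ * ((a + d) * (tt / t))) := by
    rw [trace_E, hf1tt, ← ha', ← hd', ← htdef]
  -- the key scalar inequality coming from the hypothesis
  have hkey : (1 - θ) * (a + d) ≤ (a' + d') - θ * ((a + d) * (tt / t)) := by
    rw [eX, eXt] at htr
    have h := (mul_le_mul_iff_right₀ hc2).mp htr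
    calc (1 - θ) * (a + d) = a + d - θ * (a + d) := by ring
    _ ≤ a' + d' - θ * ((a + d) * (tt / t)) := h
  -- first inequality
  have g1 : fTheta A B D θ X
      ≤ gTheta A B θ Xt + d' / tt ^ θ := by
    rw [fTheta, gTheta, ← ha, ← hd, ← htdef, ← ha', ← httdef, ← add_div]
    exact scalar_main ht htt hθ0 hθ1 hcase hkey
  -- projection positivity for the trace-norm bound
  have hQpsd : (1 - (Xᵀ * Xt) * (Xᵀ * Xt)ᵀ).PosSemidef := by
    set P : Matrix (Fin n) (Fin n) ℝ := 1 - Xt * Xtᵀ with hP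
    have hPT : Pᵀ = P := by
      rw [hP, transpose_sub, transpose_one, transpose_mul, transpose_transpose]
    have hZZ : Xt * Xtᵀ * (Xt * Xtᵀ) = Xt * Xtᵀ := by
      rw [Matrix.mul_assoc Xt Xtᵀ (Xt * Xtᵀ), ← Matrix.mul_assoc Xtᵀ Xt Xtᵀ, hXt,
        Matrix.one_mul]
    have hPP : P * P = P := by
      calc P * P = 1 - Xt * Xtᵀ - (Xt * Xtᵀ - Xt * Xtᵀ * (Xt * Xtᵀ)) := by
            rw [hP, Matrix.sub_mul, Matrix.one_mul, Matrix.mul_sub, Matrix.mul_one]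
      _ = P := by rw [hZZ, sub_self, sub_zero, hP]
    have key : 1 - (Xᵀ * Xt) * (Xᵀ * Xt)ᵀ = (P * X)ᵀ * (P * X) := by
      have e1 : (P * X)ᵀ * (P * X) = Xᵀ * (P * X) := by
        rw [transpose_mul, hPT, Matrix.mul_assoc, ← Matrix.mul_assoc P P X, hPP]
      rw [e1, hP, Matrix.sub_mul, Matrix.one_mul, Matrix.mul_sub, hX]
      congr 1
      rw [transpose_mul, transpose_transpose]
      simp only [Matrix.mul_assoc]
    rw [key]
    have hps := Matrix.posSemidef_conjTranspose_mul_self (P * X)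
    rwa [conjTranspose_eq_transpose_of_trivial] at hps
  have hdle : d' ≤ traceNorm (Xtᵀ * D) := by
    have h1 : d' = trace ((Xᵀ * Xt) * (Xtᵀ * D)) := by
      rw [hd', Matrix.mul_assoc (Xtᵀ * D) Xᵀ Xt, trace_mul_comm]
    rw [h1, traceNorm]
    exact trace_mul_le_traceNorm (Xtᵀ * D) (Xᵀ * Xt) hQpsd
  have g2 : gTheta A B θ Xt + d' / tt ^ θ
      ≤ gTheta A B θ Xt + traceNorm (Xtᵀ * D) / tt ^ θ := by
    have http : (0:ℝ) < tt ^ θ := Real.rpow_pos_of_pos htt θ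
    gcongr
  refine ⟨g1, g2, fun hlt => ?_⟩
  rw [eX, eXt] at hlt
  have h := (mul_lt_mul_iff_right₀ hc2).mp hlt
  have hkey' : (1 - θ) * (a + d) < (a' + d') - θ * ((a + d) * (tt / t)) := by
    calc (1 - θ) * (a + d) = a + d - θ * (a + d) := by ring
    _ < a' + d' - θ * ((a + d) * (tt / t)) := h
  rw [fTheta, gTheta, ← ha, ← hd, ← htdef, ← ha', ← httdef, ← add_div]
  exact scalar_main_strict ht htt hθ0 hθ1 hcase hkey'

end
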